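/- Telescoped mirror descent bound with decreasing step sizes for the strongly convex analysis: Let C ⊆ ℝ^p be a convex set, N a norm on ℝ^p, and Ψ : ℝ^p → ℝ a differentiable function that is 1-strongly convex with respect to N on C. Let Δ > 0, T ≥ 1, g_1, …, g_T ∈ ℝ^p with N*(g_t) ≤ G for all t, θ_1 ∈ C, and suppose for each t = 1, …, T that θ_{t+1} ∈ C attains the minimum over C of θ ↦ ⟨η_{t+1}·g_t − ∇Ψ(θ_t), θ⟩ + Ψ(θ), where η_{t+1} = 1/(Δ·(t+1)). Then for every θ* ∈ C, Σ_{t=1}^T ( ⟨g_t, θ_t − θ*⟩ − Δ·B_Ψ(θ*, θ_t) ) ≤ Δ·B_Ψ(θ*, θ_1) + (G²/(2Δ))·Σ_{t=1}^T 1/(t+1). -/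

import Mathlib

open scoped BigOperators
open RealInnerProductSpace Filter

/-- The dual norm `N*(g) = sup { ⟨g, v⟩ : N(v) ≤ 1 }` of a norm `N` on `ℝ^p`. -/
noncomputable def dualNorm {p : ℕ} (N : EuclideanSpace ℝ (Fin p) → ℝ)
    (g : EuclideanSpace ℝ (Fin p)) : ℝ :=
  sSup {r : ℝ | ∃ v : EuclideanSpace ℝ (Fin p), N v ≤ 1 ∧ r = ⟪g, v⟫}

/-- Bregman divergence `B_Ψ(x, y) = Ψ(x) − Ψ(y) − ⟨∇Ψ(y), x − y⟩` where `Ψ'` is the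
gradient of `Ψ`. -/
noncomputable def breg {p : ℕ} (Ψ : EuclideanSpace ℝ (Fin p) → ℝ)
    (Ψ' : EuclideanSpace ℝ (Fin p) → EuclideanSpace ℝ (Fin p))
    (x y : EuclideanSpace ℝ (Fin p)) : ℝ :=
  Ψ x - Ψ y - ⟪Ψ' y, x - y⟫

/-- `N` is a norm on `ℝ^p`. -/
def IsNorm {p : ℕ} (N : EuclideanSpace ℝ (Fin p) → ℝ) : Prop :=
  (∀ x y, N (x + y) ≤ N x + N y) ∧ (∀ (c : ℝ) (x : EuclideanSpace ℝ (Fin p)),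
    N (c • x) = |c| * N x) ∧ (∀ x, N x = 0 ↔ x = 0)

section Aux

variable {p : ℕ}

lemma IsNorm.zero' {N : EuclideanSpace ℝ (Fin p) → ℝ} (hN : IsNorm N) : N 0 = 0 :=
  (hN.2.2 0).2 rfl

lemma IsNorm.neg' {N : EuclideanSpace ℝ (Fin p) → ℝ} (hN : IsNorm N) (x) : N (-x) = N x := by
  have := hN.2.1 (-1) x; simpa using this

lemma IsNorm.nonneg' {N : EuclideanSpace ℝ (Fin p) → ℝ} (hN : IsNorm N) (x) : 0 ≤ N x := by
  have h := hN.1 x (-x)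
  rw [add_neg_cancel, hN.zero', hN.neg'] at h
  linarith

lemma abs_apply_le' (v : EuclideanSpace ℝ (Fin p)) (i : Fin p) : |v i| ≤ ‖v‖ := by
  have h := abs_real_inner_le_norm (EuclideanSpace.single i (1:ℝ)) v
  rw [EuclideanSpace.inner_single_left, EuclideanSpace.norm_single] at h
  simpa using h

lemma IsNorm.upper' {N : EuclideanSpace ℝ (Fin p) → ℝ} (hN : IsNorm N) :
    ∃ K : ℝ, 0 ≤ K ∧ ∀ v, N v ≤ K * ‖v‖ := by
  refine ⟨∑ i : Fin p, N (EuclideanSpace.single i 1),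
    Finset.sum_nonneg fun i _ => hN.nonneg' _, fun v => ?_⟩
  have hv : ∑ i : Fin p, v i • EuclideanSpace.single i (1:ℝ) = v := by
    have h := (EuclideanSpace.basisFun (Fin p) ℝ).sum_repr v
    simpa [EuclideanSpace.basisFun_apply, EuclideanSpace.basisFun_repr] using h
  calc N v = N (∑ i : Fin p, v i • EuclideanSpace.single i (1:ℝ)) := by rw [hv]
    _ ≤ ∑ i : Fin p, N (v i • EuclideanSpace.single i (1:ℝ)) :=
        Finset.le_sum_of_subadditive N hN.zero'.le hN.1 _ _
    _ = ∑ i : Fin p, |v i| * N (EuclideanSpace.single i (1:ℝ)) := by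
        simp [hN.2.1]
    _ ≤ ∑ i : Fin p, ‖v‖ * N (EuclideanSpace.single i (1:ℝ)) :=
        Finset.sum_le_sum fun i _ =>
          mul_le_mul_of_nonneg_right (abs_apply_le' v i) (hN.nonneg' _)
    _ = (∑ i : Fin p, N (EuclideanSpace.single i 1)) * ‖v‖ := by
        rw [Finset.sum_mul]; exact Finset.sum_congr rfl fun i _ => mul_comm _ _

lemma IsNorm.continuous' {N : EuclideanSpace ℝ (Fin p) → ℝ} (hN : IsNorm N) :
    Continuous N := by
  obtain ⟨K, hK0, hK⟩ := hN.upper'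
  rw [Metric.continuous_iff]
  intro x ε hε
  rcases eq_or_lt_of_le hK0 with h0 | hKpos
  · refine ⟨1, one_pos, fun y _ => ?_⟩
    have h1 : N y ≤ 0 := (hK y).trans (by rw [← h0]; simp)
    have h2 : N x ≤ 0 := (hK x).trans (by rw [← h0]; simp)
    have := hN.nonneg' x; have := hN.nonneg' y
    simp only [Real.dist_eq]
    rw [abs_of_nonpos (by linarith)]
    linarith
  · refine ⟨ε / K, div_pos hε hKpos, fun y hy => ?_⟩
    have h1 : N y ≤ N x + N (y - x) := by
      have := hN.1 x (y - x); simpa using this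
    have h2 : N x ≤ N y + N (x - y) := by
      have := hN.1 y (x - y); simpa using this
    have h3 : N (y - x) ≤ K * ‖y - x‖ := hK _
    have h4 : N (x - y) ≤ K * ‖x - y‖ := hK _
    rw [dist_eq_norm] at hy
    rw [Real.dist_eq, abs_lt]
    rw [norm_sub_rev] at h4
    have h5 : K * ‖y - x‖ < ε := by
      have h6 := mul_lt_mul_of_pos_left hy hKpos
      rwa [mul_div_cancel₀ _ (ne_of_gt hKpos)] at h6
    constructor <;> linarith

lemma IsNorm.lower' {N : EuclideanSpace ℝ (Fin p) → ℝ} (hN : IsNorm N) :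
    ∃ m : ℝ, 0 < m ∧ ∀ v, m * ‖v‖ ≤ N v := by
  by_cases hp : ∃ v : EuclideanSpace ℝ (Fin p), v ≠ 0
  · obtain ⟨v₀, hv₀⟩ := hp
    have hsph : (Metric.sphere (0 : EuclideanSpace ℝ (Fin p)) 1).Nonempty :=
      ⟨‖v₀‖⁻¹ • v₀, by simp [norm_smul, inv_mul_cancel₀ (norm_ne_zero_iff.2 hv₀)]⟩
    obtain ⟨x₀, hx₀, hmin⟩ := (isCompact_sphere (0 : EuclideanSpace ℝ (Fin p)) 1).exists_isMinOn
      hsph hN.continuous'.continuousOn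
    have hx₀n : ‖x₀‖ = 1 := by simpa using hx₀
    have hx₀ne : x₀ ≠ 0 := by intro h; rw [h] at hx₀n; simp at hx₀n
    have hm : 0 < N x₀ :=
      lt_of_le_of_ne (hN.nonneg' _) (fun h => hx₀ne ((hN.2.2 x₀).1 h.symm))
    refine ⟨N x₀, hm, fun v => ?_⟩
    rcases eq_or_ne v 0 with rfl | hv
    · simp [hN.zero']
    · have hvn : ‖v‖ ≠ 0 := norm_ne_zero_iff.2 hv
      have hu : (‖v‖⁻¹ • v) ∈ Metric.sphere (0 : EuclideanSpace ℝ (Fin p)) 1 := by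
        simp [norm_smul, inv_mul_cancel₀ hvn]
      have h1 : N x₀ ≤ N (‖v‖⁻¹ • v) := hmin hu
      have h2 : N x₀ ≤ |‖v‖⁻¹| * N v := by rwa [hN.2.1] at h1
      rw [abs_of_nonneg (by positivity)] at h2
      calc N x₀ * ‖v‖ ≤ (‖v‖⁻¹ * N v) * ‖v‖ :=
            mul_le_mul_of_nonneg_right h2 (norm_nonneg _)
        _ = N v := by field_simp
  · refine ⟨1, one_pos, fun v => ?_⟩
    push_neg at hp
    rw [hp v, hN.zero']; simp

/-- Cauchy–Schwarz-type inequality for the dual norm. -/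
lemma inner_le_dualNorm_mul {N : EuclideanSpace ℝ (Fin p) → ℝ} (hN : IsNorm N)
    (g v : EuclideanSpace ℝ (Fin p)) {G : ℝ} (hG : dualNorm N g ≤ G) :
    ⟪g, v⟫ ≤ G * N v := by
  obtain ⟨m, hm, hml⟩ := hN.lower'
  have hbdd : BddAbove {r : ℝ | ∃ w : EuclideanSpace ℝ (Fin p), N w ≤ 1 ∧ r = ⟪g, w⟫} := by
    refine ⟨‖g‖ * (1 / m), fun r hr => ?_⟩
    obtain ⟨w, hw, rfl⟩ := hr
    have h1 : ⟪g, w⟫ ≤ ‖g‖ * ‖w‖ := real_inner_le_norm g w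
    have h2 : ‖w‖ ≤ 1 / m := by
      rw [le_div_iff₀ hm]
      calc ‖w‖ * m = m * ‖w‖ := mul_comm _ _
        _ ≤ N w := hml w
        _ ≤ 1 := hw
    exact h1.trans (mul_le_mul_of_nonneg_left h2 (norm_nonneg _))
  rcases eq_or_lt_of_le (hN.nonneg' v) with h0 | hpos
  · have hv0 : v = 0 := (hN.2.2 v).1 h0.symm
    rw [hv0, hN.zero', mul_zero, inner_zero_right]
  · set u := (N v)⁻¹ • v with hu
    have hNu : N u ≤ 1 := by
      rw [hu, hN.2.1, abs_of_nonneg (by positivity), inv_mul_cancel₀ (ne_of_gt hpos)]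
    have hmem : ⟪g, u⟫ ∈ {r : ℝ | ∃ w : EuclideanSpace ℝ (Fin p), N w ≤ 1 ∧ r = ⟪g, w⟫} :=
      ⟨u, hNu, rfl⟩
    have h1 : ⟪g, u⟫ ≤ G := (le_csSup hbdd hmem).trans hG
    have h2 : ⟪g, u⟫ = (N v)⁻¹ * ⟪g, v⟫ := by rw [hu, real_inner_smul_right]
    rw [h2] at h1
    calc ⟪g, v⟫ = N v * ((N v)⁻¹ * ⟪g, v⟫) := by field_simp
      _ ≤ N v * G := mul_le_mul_of_nonneg_left h1 (le_of_lt hpos)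
      _ = G * N v := mul_comm _ _

lemma slope_lim_le {f : ℝ → ℝ} {f'0 : ℝ} (hf : HasDerivAt f f'0 0)
    {c : ℝ → ℝ} {L : ℝ} (hc : Tendsto c (nhdsWithin 0 (Set.Ioi 0)) (nhds L))
    (h : ∀ α ∈ Set.Ioc (0:ℝ) 1, (f α - f 0)/α ≤ c α) : f'0 ≤ L := by
  have hs : Tendsto (slope f 0) (nhdsWithin 0 (Set.Ioi 0)) (nhds f'0) :=
    (hasDerivAt_iff_tendsto_slope.1 hf).mono_left
      (nhdsWithin_mono _ (fun x hx => ne_of_gt hx))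
  refine le_of_tendsto_of_tendsto hs hc ?_
  filter_upwards [Ioc_mem_nhdsGT one_pos] with α hα
  simpa [slope_def_field, div_eq_inv_mul] using h α hα

lemma slope_lim_ge {f : ℝ → ℝ} {f'0 : ℝ} (hf : HasDerivAt f f'0 0) {L : ℝ}
    (h : ∀ α ∈ Set.Ioc (0:ℝ) 1, L ≤ (f α - f 0)/α) : L ≤ f'0 := by
  have hs : Tendsto (slope f 0) (nhdsWithin 0 (Set.Ioi 0)) (nhds f'0) :=
    (hasDerivAt_iff_tendsto_slope.1 hf).mono_left
      (nhdsWithin_mono _ (fun x hx => ne_of_gt hx))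
  refine le_of_tendsto_of_tendsto tendsto_const_nhds hs ?_
  filter_upwards [Ioc_mem_nhdsGT one_pos] with α hα
  simpa [slope_def_field, div_eq_inv_mul] using h α hα

lemma dirDeriv {Ψ : EuclideanSpace ℝ (Fin p) → ℝ} {y Gr : EuclideanSpace ℝ (Fin p)}
    (d : EuclideanSpace ℝ (Fin p)) (hΨ : HasGradientAt Ψ Gr y) :
    HasDerivAt (fun t : ℝ => Ψ (y + t • d)) ⟪Gr, d⟫ 0 := by
  have h1 : HasDerivAt (fun t : ℝ => y + t • d) d 0 := by
    simpa using ((hasDerivAt_id (0:ℝ)).smul_const d).const_add y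
  have h2 : HasFDerivAt Ψ ((InnerProductSpace.toDual ℝ _) Gr) (y + (0:ℝ) • d) := by
    simpa using hΨ.hasFDerivAt
  have := h2.comp_hasDerivAt 0 h1
  exact this

/-- Strong convexity implies the Bregman divergence lower bound. -/
lemma breg_lower {C : Set (EuclideanSpace ℝ (Fin p))}
    {N : EuclideanSpace ℝ (Fin p) → ℝ}
    {Ψ : EuclideanSpace ℝ (Fin p) → ℝ}
    {Ψ' : EuclideanSpace ℝ (Fin p) → EuclideanSpace ℝ (Fin p)}
    (hΨdiff : ∀ x, HasGradientAt Ψ (Ψ' x) x)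
    (hΨsc : ∀ x ∈ C, ∀ y ∈ C, ∀ α ∈ Set.Icc (0:ℝ) 1,
      Ψ (α • x + (1 - α) • y) ≤
        α * Ψ x + (1 - α) * Ψ y - 1 * α * (1 - α) / 2 * (N (x - y)) ^ 2)
    {x y : EuclideanSpace ℝ (Fin p)} (hx : x ∈ C) (hy : y ∈ C) :
    1/2 * (N (x - y))^2 ≤ breg Ψ Ψ' x y := by
  set d := x - y with hd
  have hder : HasDerivAt (fun t : ℝ => Ψ (y + t • d)) ⟪Ψ' y, d⟫ 0 := dirDeriv d (hΨdiff y)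
  have hkey : ⟪Ψ' y, d⟫ ≤ Ψ x - Ψ y - 1/2 * (N (x - y))^2 := by
    refine slope_lim_le hder (c := fun α => Ψ x - Ψ y - (1 - α)/2 * (N (x - y))^2) ?_ ?_
    · have hcont : Continuous (fun α : ℝ => Ψ x - Ψ y - (1 - α)/2 * (N (x - y))^2) := by
        continuity
      have := (hcont.tendsto 0).mono_left (nhdsWithin_le_nhds (s := Set.Ioi (0:ℝ)))
      simpa using this
    · intro α hα
      have hmem : α ∈ Set.Icc (0:ℝ) 1 := ⟨le_of_lt hα.1, hα.2⟩
      have hsc := hΨsc x hx y hy α hmem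
      have heq : α • x + (1 - α) • y = y + α • d := by
        rw [hd]; module
      rw [heq] at hsc
      have h0 : y + (0:ℝ) • d = y := by simp
      rw [div_le_iff₀ hα.1, h0]
      nlinarith [hsc]
  simp only [breg]
  rw [← hd]
  linarith

/-- First-order optimality condition for the minimizer of a linear-plus-Ψ objective. -/
lemma first_order_opt {C : Set (EuclideanSpace ℝ (Fin p))} (hC : Convex ℝ C)
    {Ψ : EuclideanSpace ℝ (Fin p) → ℝ}
    {Ψ' : EuclideanSpace ℝ (Fin p) → EuclideanSpace ℝ (Fin p)}
    (hΨdiff : ∀ x, HasGradientAt Ψ (Ψ' x) x)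
    {w : EuclideanSpace ℝ (Fin p)} (hw : w ∈ C) (a : EuclideanSpace ℝ (Fin p))
    (hmin : ∀ u ∈ C, ⟪a, w⟫ + Ψ w ≤ ⟪a, u⟫ + Ψ u)
    {u : EuclideanSpace ℝ (Fin p)} (hu : u ∈ C) :
    0 ≤ ⟪a + Ψ' w, u - w⟫ := by
  set d := u - w with hd
  have hder : HasDerivAt (fun t : ℝ => Ψ (w + t • d)) ⟪Ψ' w, d⟫ 0 := dirDeriv d (hΨdiff w)
  have hkey : -⟪a, d⟫ ≤ ⟪Ψ' w, d⟫ := by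
    refine slope_lim_ge hder ?_
    intro α hα
    have hmem : w + α • d ∈ C := by
      have h1 : w + α • d = α • u + (1 - α) • w := by rw [hd]; module
      rw [h1]
      exact hC hu hw (le_of_lt hα.1) (by linarith [hα.2]) (by ring)
    have h2 := hmin _ hmem
    have h3 : ⟪a, w + α • d⟫ = ⟪a, w⟫ + α * ⟪a, d⟫ := by
      rw [inner_add_right, real_inner_smul_right]
    rw [h3] at h2
    have h0 : w + (0:ℝ) • d = w := by simp
    rw [le_div_iff₀ hα.1, h0]
    linarith
  have : ⟪a + Ψ' w, d⟫ = ⟪a, d⟫ + ⟪Ψ' w, d⟫ := inner_add_left _ _ _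
  rw [this]
  linarith

lemma three_point {Ψ : EuclideanSpace ℝ (Fin p) → ℝ}
    {Ψ' : EuclideanSpace ℝ (Fin p) → EuclideanSpace ℝ (Fin p)}
    (x y z : EuclideanSpace ℝ (Fin p)) :
    breg Ψ Ψ' x y - breg Ψ Ψ' x z - breg Ψ Ψ' z y = ⟪Ψ' z - Ψ' y, x - z⟫ := by
  simp only [breg, inner_sub_left, inner_sub_right]
  ring

end Aux

/-- Telescoped mirror descent bound with decreasing step sizes `η_{t+1} = 1/(Δ(t+1))`
for the strongly convex analysis. -/
theorem mirror_descent_telescoped_strongly_convex {p : ℕ}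
    (C : Set (EuclideanSpace ℝ (Fin p))) (hC : Convex ℝ C)
    (N : EuclideanSpace ℝ (Fin p) → ℝ) (hN : IsNorm N)
    (Ψ : EuclideanSpace ℝ (Fin p) → ℝ)
    (Ψ' : EuclideanSpace ℝ (Fin p) → EuclideanSpace ℝ (Fin p))
    (hΨdiff : ∀ x, HasGradientAt Ψ (Ψ' x) x)
    (hΨsc : ∀ x ∈ C, ∀ y ∈ C, ∀ α ∈ Set.Icc (0:ℝ) 1,
      Ψ (α • x + (1 - α) • y) ≤
        α * Ψ x + (1 - α) * Ψ y - 1 * α * (1 - α) / 2 * (N (x - y)) ^ 2)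
    (Δ : ℝ) (hΔ : 0 < Δ) (T : ℕ) (hT : 1 ≤ T)
    (G : ℝ) (g θ : ℕ → EuclideanSpace ℝ (Fin p))
    (hG : ∀ t ∈ Finset.Icc 1 T, dualNorm N (g t) ≤ G)
    (hθ1 : θ 1 ∈ C)
    (hstep : ∀ t ∈ Finset.Icc 1 T, θ (t + 1) ∈ C ∧
      ∀ u ∈ C,
        ⟪(1 / (Δ * ((t : ℝ) + 1))) • g t - Ψ' (θ t), θ (t + 1)⟫ + Ψ (θ (t + 1)) ≤
          ⟪(1 / (Δ * ((t : ℝ) + 1))) • g t - Ψ' (θ t), u⟫ + Ψ u)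
    (θs : EuclideanSpace ℝ (Fin p)) (hθs : θs ∈ C) :
    ∑ t ∈ Finset.Icc 1 T, (⟪g t, θ t - θs⟫ - Δ * breg Ψ Ψ' θs (θ t)) ≤
      Δ * breg Ψ Ψ' θs (θ 1) +
        G ^ 2 / (2 * Δ) * ∑ t ∈ Finset.Icc 1 T, 1 / ((t : ℝ) + 1) := by
  -- all iterates are in C
  have hθC : ∀ t, 1 ≤ t → t ≤ T + 1 → θ t ∈ C := by
    intro t h1 h2
    rcases Nat.exists_eq_add_of_le h1 with ⟨s, rfl⟩
    cases s with
    | zero => simpa using hθ1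
    | succ s =>
      have hmem : (1 + s) ∈ Finset.Icc 1 T := by
        simp only [Finset.mem_Icc]; omega
      have h3 := (hstep (1 + s) hmem).1
      rwa [show 1 + (s + 1) = (1 + s) + 1 by omega]
  -- Bregman nonnegativity on C
  have hBnn : ∀ x ∈ C, ∀ y ∈ C, 0 ≤ breg Ψ Ψ' x y := by
    intro x hx y hy
    have h1 := breg_lower hΨdiff hΨsc hx hy
    nlinarith [sq_nonneg (N (x - y))]
  set f : ℕ → ℝ := fun n => Δ * n * breg Ψ Ψ' θs (θ n) with hf
  -- per-step inequality
  have key : ∀ t ∈ Finset.Icc 1 T,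
      ⟪g t, θ t - θs⟫ - Δ * breg Ψ Ψ' θs (θ t) ≤
        (f t - f (t + 1)) + G ^ 2 / (2 * Δ) * (1 / ((t : ℝ) + 1)) := by
    intro t ht
    simp only [Finset.mem_Icc] at ht
    have hθt : θ t ∈ C := hθC t ht.1 (by omega)
    have hθt1 : θ (t + 1) ∈ C := hθC (t + 1) (by omega) (by omega)
    set η : ℝ := 1 / (Δ * ((t : ℝ) + 1)) with hη
    have htpos : (0:ℝ) < (t : ℝ) + 1 := by positivity
    have hηpos : 0 < η := by rw [hη]; positivity
    -- optimality
    have hopt := first_order_opt hC hΨdiff hθt1 (η • g t - Ψ' (θ t))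
      (fun u hu => (hstep t (Finset.mem_Icc.2 ht)).2 u hu) hθs
    have hopt' : η * ⟪g t, θ (t + 1) - θs⟫ ≤
        ⟪Ψ' (θ (t + 1)) - Ψ' (θ t), θs - θ (t + 1)⟫ := by
      have h1 : ⟪η • g t - Ψ' (θ t) + Ψ' (θ (t + 1)), θs - θ (t + 1)⟫ =
          η * ⟪g t, θs - θ (t + 1)⟫ + ⟪Ψ' (θ (t + 1)) - Ψ' (θ t), θs - θ (t + 1)⟫ := by
        simp only [inner_add_left, inner_sub_left, real_inner_smul_left]
        ring
      have h2 : ⟪g t, θs - θ (t + 1)⟫ = -⟪g t, θ (t + 1) - θs⟫ := by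
        rw [← inner_neg_right]; congr 1; abel
      rw [h1, h2] at hopt
      linarith
    have htp := three_point (Ψ := Ψ) (Ψ' := Ψ') θs (θ t) (θ (t + 1))
    -- Cauchy-Schwarz + AM-GM
    have hcs : ⟪g t, θ t - θ (t + 1)⟫ ≤ G * N (θ t - θ (t + 1)) :=
      inner_le_dualNorm_mul hN _ _ (hG t (Finset.mem_Icc.2 ht))
    have hNflip : N (θ t - θ (t + 1)) = N (θ (t + 1) - θ t) := by
      rw [← hN.neg' (θ (t + 1) - θ t)]; congr 1; abel
    have hbl := breg_lower hΨdiff hΨsc hθt1 hθt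
    have hNnn := hN.nonneg' (θ t - θ (t + 1))
    have hamgm : G * N (θ t - θ (t + 1)) ≤
        η / 2 * G ^ 2 + 1 / (2 * η) * (N (θ t - θ (t + 1))) ^ 2 := by
      have h7 : η / 2 * G ^ 2 + 1 / (2 * η) * (N (θ t - θ (t + 1))) ^ 2
          - G * N (θ t - θ (t + 1)) = 1 / (2 * η) * (η * G - N (θ t - θ (t + 1))) ^ 2 := by
        field_simp
        ring
      have h8 : 0 ≤ 1 / (2 * η) * (η * G - N (θ t - θ (t + 1))) ^ 2 := by positivity
      linarith
    have hsplit : ⟪g t, θ t - θs⟫ =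
        ⟪g t, θ t - θ (t + 1)⟫ + ⟪g t, θ (t + 1) - θs⟫ := by
      rw [← inner_add_right]; congr 1; abel
    have hstep1 : ⟪g t, θ (t + 1) - θs⟫ ≤
        (1 / η) * (breg Ψ Ψ' θs (θ t) - breg Ψ Ψ' θs (θ (t + 1))
          - breg Ψ Ψ' (θ (t + 1)) (θ t)) := by
      rw [← htp] at hopt'
      calc ⟪g t, θ (t + 1) - θs⟫ = (1 / η) * (η * ⟪g t, θ (t + 1) - θs⟫) := by
            field_simp
        _ ≤ (1 / η) * (breg Ψ Ψ' θs (θ t) - breg Ψ Ψ' θs (θ (t + 1))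
              - breg Ψ Ψ' (θ (t + 1)) (θ t)) := by
            apply mul_le_mul_of_nonneg_left _ (by positivity)
            rw [htp]; rw [← htp]; exact hopt'
    have hstep2 : ⟪g t, θ t - θ (t + 1)⟫ ≤
        η / 2 * G ^ 2 + (1 / η) * breg Ψ Ψ' (θ (t + 1)) (θ t) := by
      have h1 : 1 / (2 * η) * (N (θ t - θ (t + 1))) ^ 2 ≤
          (1 / η) * breg Ψ Ψ' (θ (t + 1)) (θ t) := by
        rw [hNflip]
        have h2 : (0:ℝ) < 1 / η := by positivity
        calc 1 / (2 * η) * (N (θ (t + 1) - θ t)) ^ 2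
            = (1 / η) * (1 / 2 * (N (θ (t + 1) - θ t)) ^ 2) := by ring
          _ ≤ (1 / η) * breg Ψ Ψ' (θ (t + 1)) (θ t) :=
              mul_le_mul_of_nonneg_left hbl (le_of_lt h2)
      linarith [hcs, hamgm]
    -- combine
    have hinv : 1 / η = Δ * ((t : ℝ) + 1) := by
      rw [hη]; field_simp
    have hη2 : η / 2 * G ^ 2 = G ^ 2 / (2 * Δ) * (1 / ((t : ℝ) + 1)) := by
      rw [hη]; field_simp
    have hfexp : f t = Δ * (t : ℝ) * breg Ψ Ψ' θs (θ t) := by rw [hf]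
    have hfexp1 : f (t + 1) = Δ * ((t : ℝ) + 1) * breg Ψ Ψ' θs (θ (t + 1)) := by
      rw [hf]; push_cast; ring_nf
    rw [hsplit, hfexp, hfexp1]
    rw [hinv] at hstep1 hstep2
    rw [hη2] at hstep2
    nlinarith [hstep1, hstep2]
  -- telescoping
  have htel : ∑ t ∈ Finset.Icc 1 T, (f t - f (t + 1)) = f 1 - f (T + 1) := by
    have h1 := Finset.sum_range_sub' (fun i => f (1 + i)) T
    rw [← Finset.Ico_add_one_right_eq_Icc, Finset.sum_Ico_eq_sum_range,
      show T + 1 - 1 = T from rfl]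
    rw [Nat.add_comm 1 T] at h1
    exact h1
  calc ∑ t ∈ Finset.Icc 1 T, (⟪g t, θ t - θs⟫ - Δ * breg Ψ Ψ' θs (θ t))
      ≤ ∑ t ∈ Finset.Icc 1 T, ((f t - f (t + 1)) + G ^ 2 / (2 * Δ) * (1 / ((t : ℝ) + 1))) :=
        Finset.sum_le_sum key
    _ = (f 1 - f (T + 1)) + G ^ 2 / (2 * Δ) * ∑ t ∈ Finset.Icc 1 T, 1 / ((t : ℝ) + 1) := by
        rw [Finset.sum_add_distrib, htel, Finset.mul_sum]
    _ ≤ Δ * breg Ψ Ψ' θs (θ 1) + G ^ 2 / (2 * Δ) * ∑ t ∈ Finset.Icc 1 T, 1 / ((t : ℝ) + 1) := by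
        have h1 : f 1 = Δ * breg Ψ Ψ' θs (θ 1) := by rw [hf]; push_cast; ring
        have h2 : 0 ≤ f (T + 1) := by
          rw [hf]
          have hB := hBnn θs hθs (θ (T + 1)) (hθC (T + 1) (by omega) (by omega))
          have : (0:ℝ) ≤ (T:ℝ) + 1 := by positivity
          push_cast
          positivity
        linarith
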